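/- arXiv:1510.00966 — 3 statements merged into one kernel-verified Lean document; each statement's English description precedes it below -/
import Mathlib

section
/- Let ξ : [0,∞) → ℝ be continuous with ξ(0) ≥ 0. Define η(t) = ξ(t) − min(0, min_{s∈[0,t]} ξ(s)). Then η is the unique continuous function of the form η = ξ + L, where L is nondecreasing, continuous, L(0) = 0, η(t) ≥ 0 for all t, and L increases only on the set {t : η(t) = 0} (i.e. ∫₀^∞ η(s) dL(s) = 0). -/
open Set Filter Topology

/-- Uniqueness in the one-dimensional Skorokhod reflection problem: if `η = ξ + L` with `L`
nondecreasing continuous, `L 0 = 0`, `η ≥ 0`, and `L` increases only where `η = 0`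
(it is constant on any interval where `η > 0`), then necessarily
`η(t) = ξ(t) - min(0, min_{s∈[0,t]} ξ(s))`. -/
theorem stmt3 (ξ η L : ℝ → ℝ)
    (hξ : ContinuousOn ξ (Ici 0)) (hξ0 : 0 ≤ ξ 0)
    (hη : ContinuousOn η (Ici 0)) (hL : ContinuousOn L (Ici 0))
    (hdecomp : ∀ t : ℝ, 0 ≤ t → η t = ξ t + L t)
    (hLmono : MonotoneOn L (Ici 0)) (hL0 : L 0 = 0)
    (hηpos : ∀ t : ℝ, 0 ≤ t → 0 ≤ η t)
    (hflat : ∀ s t : ℝ, 0 ≤ s → s ≤ t → (∀ u ∈ Icc s t, 0 < η u) → L t = L s) :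
    ∀ t : ℝ, 0 ≤ t → η t = ξ t - min 0 (sInf (ξ '' Icc 0 t)) := by
  intro t ht
  set m : ℝ := min 0 (sInf (ξ '' Icc 0 t)) with hm
  have hIcc : Icc (0:ℝ) t ⊆ Ici 0 := fun u hu => hu.1
  have hbdd : BddBelow (ξ '' Icc 0 t) :=
    ((isCompact_Icc.image_of_continuousOn (hξ.mono hIcc)).bddBelow)
  have hne : (ξ '' Icc 0 t).Nonempty := ⟨ξ 0, mem_image_of_mem _ ⟨le_refl 0, ht⟩⟩
  have hmle : ∀ u ∈ Icc (0:ℝ) t, m ≤ ξ u := fun u hu =>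
    le_trans (min_le_right _ _) (csInf_le hbdd (mem_image_of_mem _ hu))
  have hLnonneg : ∀ u ∈ Icc (0:ℝ) t, 0 ≤ L u := fun u hu => by
    have := hLmono (mem_Ici.2 (le_refl 0)) (hIcc hu) hu.1
    rwa [hL0] at this
  -- Part 1 : -m ≤ L t
  have part1 : -m ≤ L t := by
    have h1 : -L t ≤ 0 := neg_nonpos.2 (hLnonneg t ⟨ht, le_refl t⟩)
    have h2 : -L t ≤ sInf (ξ '' Icc 0 t) := by
      apply le_csInf hne
      rintro b ⟨u, hu, rfl⟩
      have hηu := hηpos u (hu.1)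
      rw [hdecomp u hu.1] at hηu
      have : -L u ≤ ξ u := by linarith
      have hLu : L u ≤ L t := hLmono (hIcc hu) (mem_Ici.2 ht) hu.2
      linarith
    have : -L t ≤ m := le_min h1 h2
    linarith
  -- Part 2 : L t ≤ -m
  have part2 : L t ≤ -m := by
    by_contra hcon
    push_neg at hcon
    set S : Set ℝ := Icc 0 t ∩ L ⁻¹' (Iic (-m)) with hS
    have hSne : (0:ℝ) ∈ S := by
      refine ⟨⟨le_refl 0, ht⟩, ?_⟩
      simp only [mem_preimage, mem_Iic, hL0]
      have : m ≤ 0 := min_le_left _ _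
      linarith
    have hSbdd : BddAbove S := ⟨t, fun u hu => hu.1.2⟩
    have hSclosed : IsClosed S :=
      (hL.mono hIcc).preimage_isClosed_of_isClosed isClosed_Icc isClosed_Iic
    have hsmem : sSup S ∈ S := hSclosed.csSup_mem ⟨0, hSne⟩ hSbdd
    set s := sSup S with hs
    have hs0 : (0:ℝ) ≤ s := hsmem.1.1
    have hst : s ≤ t := hsmem.1.2
    have hLs : L s ≤ -m := hsmem.2
    have hslt : s < t := hst.lt_of_ne (by intro h; rw [h] at hLs; exact absurd hLs (not_le.2 hcon))
    -- on (s, t], L u > -m hence η u > 0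
    have hpos : ∀ u ∈ Ioc s t, 0 < η u := by
      intro u hu
      have hu0 : (0:ℝ) ≤ u := le_trans hs0 hu.1.le
      have hLu : -m < L u := by
        by_contra hle
        push_neg at hle
        have : u ≤ s := le_csSup hSbdd ⟨⟨hu0, hu.2⟩, hle⟩
        exact absurd hu.1 (not_lt.2 this)
      have := hmle u ⟨hu0, hu.2⟩
      rw [hdecomp u hu0]
      linarith
    -- L is constant = L t on (s, t]
    have hconst : ∀ s' ∈ Ioc s t, L t = L s' := by
      intro s' hs'
      refine hflat s' t (le_trans hs0 hs'.1.le) hs'.2 ?_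
      intro u hu
      exact hpos u ⟨lt_of_lt_of_le hs'.1 hu.1, hu.2⟩
    -- take limit s' → s⁺
    have hmem : Ioc s t ∈ 𝓝[>] s := Ioc_mem_nhdsGT_of_mem ⟨le_refl s, hslt⟩
    have htend : Tendsto L (𝓝[>] s) (𝓝 (L s)) :=
      ((hL s (mem_Ici.2 hs0)).mono (fun u (hu : u ∈ Ioi s) => le_trans hs0 hu.le)).tendsto
    have htend' : Tendsto L (𝓝[>] s) (𝓝 (L t)) := by
      refine tendsto_const_nhds.congr' ?_
      filter_upwards [hmem] with u hu
      exact hconst u hu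
    have : L s = L t := tendsto_nhds_unique htend htend'
    rw [this] at hLs
    exact absurd hLs (not_le.2 hcon)
  have hLt : L t = -m := le_antisymm part2 (by linarith)
  rw [hdecomp t ht, hLt]
  ring
end

section
/- Let f_n, f : [0,T] → ℝ be continuous with f_n → f uniformly, and let l_n, l : [0,T] → ℝ be continuous nondecreasing functions with l_n → l uniformly. Then sup_{t∈[0,T]} |∫₀ᵗ f_n(s) dl_n(s) − ∫₀ᵗ f(s) dl(s)| → 0 as n → ∞. -/
open Set MeasureTheory Filter

namespace Stmt10Aux

lemma measure_Ioc_toReal (g : StieltjesFunction ℝ) {a b : ℝ} (hab : a ≤ b) :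
    (g.measure (Ioc a b)).toReal = g b - g a := by
  rw [StieltjesFunction.measure_Ioc, ENNReal.toReal_ofReal (sub_nonneg.2 (g.mono hab))]

lemma measure_Ioc_lt_top (g : StieltjesFunction ℝ) (a b : ℝ) :
    g.measure (Ioc a b) < ⊤ := by
  rw [StieltjesFunction.measure_Ioc]; exact ENNReal.ofReal_lt_top

lemma abs_integral_le (g : StieltjesFunction ℝ) {ψ : ℝ → ℝ} {a b : ℝ} (hab : a ≤ b)
    (hint : IntegrableOn ψ (Ioc a b) g.measure)
    {ε : ℝ} (hψ : ∀ x ∈ Ioc a b, |ψ x| ≤ ε) :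
    |∫ s in Ioc a b, ψ s ∂g.measure| ≤ ε * (g b - g a) := by
  have h := norm_setIntegral_le_of_norm_le_const (μ := g.measure) (s := Ioc a b) (C := ε)
    (f := ψ) (measure_Ioc_lt_top g a b) (by simpa [Real.norm_eq_abs] using hψ)
  rwa [Real.norm_eq_abs, measureReal_def, measure_Ioc_toReal g hab] at h

lemma piece (g h : StieltjesFunction ℝ) {φ : ℝ → ℝ} {a b : ℝ} (hab : a ≤ b)
    (hg : IntegrableOn φ (Ioc a b) g.measure) (hh : IntegrableOn φ (Ioc a b) h.measure)
    {c ε' : ℝ} (hosc : ∀ x ∈ Ioc a b, |φ x - c| ≤ ε') {C : ℝ} (hc : |c| ≤ C)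
    {η : ℝ} (hga : |g a - h a| ≤ η) (hgb : |g b - h b| ≤ η) :
    |(∫ s in Ioc a b, φ s ∂g.measure) - ∫ s in Ioc a b, φ s ∂h.measure|
      ≤ ε' * (g b - g a) + ε' * (h b - h a) + C * (2 * η) := by
  have key : ∀ (G : StieltjesFunction ℝ), IntegrableOn φ (Ioc a b) G.measure →
      ∫ s in Ioc a b, φ s ∂G.measure
        = (∫ s in Ioc a b, (φ s - c) ∂G.measure) + c * (G b - G a) := by
    intro G hG
    have hconst : IntegrableOn (fun _ => c) (Ioc a b) G.measure :=
      integrableOn_const (measure_Ioc_lt_top G a b).ne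
    have : ∫ s in Ioc a b, (φ s - c) ∂G.measure
        = (∫ s in Ioc a b, φ s ∂G.measure) - ∫ s in Ioc a b, (fun _ => c) s ∂G.measure :=
      integral_sub hG hconst
    rw [this, setIntegral_const, measureReal_def, measure_Ioc_toReal G hab, smul_eq_mul]
    ring
  rw [key g hg, key h hh]
  have hconst : ∀ (G : StieltjesFunction ℝ), IntegrableOn (fun _ => c) (Ioc a b) G.measure :=
    fun G => integrableOn_const (measure_Ioc_lt_top G a b).ne
  have e1 : |∫ s in Ioc a b, (φ s - c) ∂g.measure| ≤ ε' * (g b - g a) :=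
    abs_integral_le g hab (hg.sub (hconst g)) hosc
  have e2 : |∫ s in Ioc a b, (φ s - c) ∂h.measure| ≤ ε' * (h b - h a) :=
    abs_integral_le h hab (hh.sub (hconst h)) hosc
  have e3 : |c * ((g b - g a) - (h b - h a))| ≤ C * (2 * η) := by
    rw [abs_mul]
    have hgb' := abs_le.1 hgb
    have hga' := abs_le.1 hga
    have h4 : |(g b - g a) - (h b - h a)| ≤ 2 * η :=
      abs_le.2 ⟨by linarith, by linarith⟩
    exact mul_le_mul hc h4 (abs_nonneg _) ((abs_nonneg c).trans hc)
  set Ig := ∫ s in Ioc a b, (φ s - c) ∂g.measure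
  set Ih := ∫ s in Ioc a b, (φ s - c) ∂h.measure
  have : (Ig + c * (g b - g a)) - (Ih + c * (h b - h a))
      = (Ig - Ih) + c * ((g b - g a) - (h b - h a)) := by ring
  rw [this]
  calc |(Ig - Ih) + c * ((g b - g a) - (h b - h a))|
      ≤ |Ig - Ih| + |c * ((g b - g a) - (h b - h a))| := abs_add_le _ _
    _ ≤ (|Ig| + |Ih|) + |c * ((g b - g a) - (h b - h a))| := by
        have : |Ig - Ih| ≤ |Ig| + |Ih| := abs_sub _ _
        linarith
    _ ≤ ε' * (g b - g a) + ε' * (h b - h a) + C * (2 * η) := by linarith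

lemma key (T : ℝ) (hT : 0 ≤ T) (g h : StieltjesFunction ℝ) {φ : ℝ → ℝ}
    (hφ : ContinuousOn φ (Icc 0 T)) {C : ℝ} (hC : ∀ x ∈ Icc 0 T, |φ x| ≤ C)
    {k : ℕ} (hk : 0 < k) {ε' : ℝ}
    (hosc : ∀ x ∈ Icc (0:ℝ) T, ∀ y ∈ Icc (0:ℝ) T, |x - y| ≤ T / k → |φ x - φ y| ≤ ε')
    {η : ℝ} (hη : ∀ x ∈ Icc (0:ℝ) T, |g x - h x| ≤ η)
    {t : ℝ} (ht : t ∈ Icc 0 T) :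
    |(∫ s in Ioc (0:ℝ) t, φ s ∂g.measure) - ∫ s in Ioc (0:ℝ) t, φ s ∂h.measure|
      ≤ ε' * ((g T - g 0) + (h T - h 0)) + C * (k * (2 * η)) := by
  have hk' : (0:ℝ) < k := Nat.cast_pos.2 hk
  set p : ℕ → ℝ := fun i => (i : ℝ) * T / k with hp
  set a : ℕ → ℝ := fun i => min t (p i) with ha
  have hpmono : ∀ i : ℕ, p i ≤ p (i+1) := by
    intro i
    have h1 : (i:ℝ) ≤ ((i+1 : ℕ) : ℝ) := by exact_mod_cast Nat.le_succ i
    have h2 : (i:ℝ) * T ≤ ((i+1 : ℕ) : ℝ) * T := mul_le_mul_of_nonneg_right h1 hT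
    simp only [hp]
    exact (div_le_div_iff_of_pos_right hk').2 h2
  have hpmem : ∀ i : ℕ, i ≤ k → p i ∈ Icc (0:ℝ) T := by
    intro i hi
    constructor
    · positivity
    · simp only [hp]
      rw [div_le_iff₀ hk']
      have : (i:ℝ) ≤ k := by exact_mod_cast hi
      nlinarith
  have ha0 : a 0 = 0 := by simp [ha, hp, min_eq_right ht.1]
  have hak : a k = t := by
    have : p k = T := by simp only [hp]; exact mul_div_cancel_left₀ T hk'.ne'
    simp [ha, this, min_eq_left ht.2]
  have hamono : ∀ i : ℕ, a i ≤ a (i+1) := fun i => min_le_min le_rfl (hpmono i)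
  have haIcc : ∀ i : ℕ, i + 1 ≤ k → Icc (a i) (a (i+1)) ⊆ Icc (0:ℝ) T := by
    intro i hi
    apply Icc_subset_Icc
    · exact le_min ht.1 (hpmem i (by omega)).1
    · exact le_trans (min_le_left _ _) ht.2
  have haIoc : ∀ i : ℕ, Ioc (a i) (a (i+1)) ⊆ Ioc (p i) (p (i+1)) := by
    intro i x hx
    refine ⟨?_, le_trans hx.2 (min_le_right _ _)⟩
    rcases le_total (p i) t with h'|h'
    · simpa [ha, min_eq_right h'] using hx.1
    · exfalso
      have h1 : t < x := by simpa [ha, min_eq_left h'] using hx.1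
      have h2 : x ≤ t := le_trans hx.2 (min_le_left _ _)
      linarith
  have hint : ∀ (G : StieltjesFunction ℝ), ∀ i < k,
      IntervalIntegrable φ G.measure (a i) (a (i+1)) := by
    intro G i hi
    apply ContinuousOn.intervalIntegrable
    rw [uIcc_of_le (hamono i)]
    exact hφ.mono (haIcc i hi)
  have hintOn : ∀ (G : StieltjesFunction ℝ), ∀ i < k,
      IntegrableOn φ (Ioc (a i) (a (i+1))) G.measure := by
    intro G i hi
    exact (hint G i hi).1
  have hsplit : ∀ (G : StieltjesFunction ℝ),
      ∫ s in Ioc (0:ℝ) t, φ s ∂G.measure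
        = ∑ i ∈ Finset.range k, ∫ s in Ioc (a i) (a (i+1)), φ s ∂G.measure := by
    intro G
    calc ∫ s in Ioc (0:ℝ) t, φ s ∂G.measure
        = ∫ x in (a 0)..(a k), φ x ∂G.measure := by
          rw [ha0, hak, intervalIntegral.integral_of_le ht.1]
      _ = ∑ i ∈ Finset.range k, ∫ x in (a i)..(a (i+1)), φ x ∂G.measure :=
          (intervalIntegral.sum_integral_adjacent_intervals (hint G)).symm
      _ = ∑ i ∈ Finset.range k, ∫ s in Ioc (a i) (a (i+1)), φ s ∂G.measure :=
          Finset.sum_congr rfl fun i _ => intervalIntegral.integral_of_le (hamono i)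
  rw [hsplit g, hsplit h, ← Finset.sum_sub_distrib]
  have hε'0 : 0 ≤ ε' := by
    have := hosc 0 (left_mem_Icc.2 hT) 0 (left_mem_Icc.2 hT) (by simp; positivity)
    simpa using (abs_nonneg _).trans this
  have hpiece : ∀ i ∈ Finset.range k,
      |(∫ s in Ioc (a i) (a (i+1)), φ s ∂g.measure)
        - ∫ s in Ioc (a i) (a (i+1)), φ s ∂h.measure|
      ≤ (ε' * (g (a (i+1)) - g (a i)) + ε' * (h (a (i+1)) - h (a i))) + C * (2 * η) := by
    intro i hi
    rw [Finset.mem_range] at hi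
    have hik : i + 1 ≤ k := hi
    have hpi := hpmem i (by omega)
    have := piece g h (hamono i) (hintOn g i hi) (hintOn h i hi)
      (c := φ (p i)) (ε' := ε') ?_ (hC _ hpi) (η := η)
      (hη _ ((haIcc i hik) ⟨le_rfl, hamono i⟩))
      (hη _ ((haIcc i hik) ⟨hamono i, le_rfl⟩))
    · linarith [this]
    · intro x hx
      have hx' := haIoc i hx
      have hxmem : x ∈ Icc (0:ℝ) T := (haIcc i hik) (Ioc_subset_Icc_self hx)
      apply hosc x hxmem (p i) hpi
      have h1 : p i < x := hx'.1
      have h2 : x ≤ p (i+1) := hx'.2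
      have h3 : p (i+1) - p i = T / k := by
        simp only [hp]
        push_cast
        ring
      rw [abs_of_pos (by linarith)]
      linarith
  calc |∑ i ∈ Finset.range k, ((∫ s in Ioc (a i) (a (i+1)), φ s ∂g.measure)
          - ∫ s in Ioc (a i) (a (i+1)), φ s ∂h.measure)|
      ≤ ∑ i ∈ Finset.range k, |(∫ s in Ioc (a i) (a (i+1)), φ s ∂g.measure)
          - ∫ s in Ioc (a i) (a (i+1)), φ s ∂h.measure| := Finset.abs_sum_le_sum_abs _ _
    _ ≤ ∑ i ∈ Finset.range k, ((ε' * (g (a (i+1)) - g (a i))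
          + ε' * (h (a (i+1)) - h (a i))) + C * (2 * η)) := Finset.sum_le_sum hpiece
    _ = ε' * (g (a k) - g (a 0)) + ε' * (h (a k) - h (a 0)) + k * (C * (2 * η)) := by
        rw [Finset.sum_add_distrib, Finset.sum_add_distrib, ← Finset.mul_sum, ← Finset.mul_sum,
          Finset.sum_range_sub (fun i => g (a i)), Finset.sum_range_sub (fun i => h (a i)),
          Finset.sum_const, Finset.card_range, nsmul_eq_mul]
    _ ≤ ε' * ((g T - g 0) + (h T - h 0)) + C * (k * (2 * η)) := by
        rw [ha0, hak]
        have h1 : g t ≤ g T := g.mono ht.2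
        have h2 : h t ≤ h T := h.mono ht.2
        nlinarith [mul_le_mul_of_nonneg_left h1 hε'0, mul_le_mul_of_nonneg_left h2 hε'0]

end Stmt10Aux

open Stmt10Aux in
/-- If `f_n → f` uniformly on `[0,T]` and the continuous nondecreasing integrators `l_n → l`
uniformly on `[0,T]`, then `∫₀ᵗ f_n dl_n → ∫₀ᵗ f dl` uniformly in `t ∈ [0,T]`. -/
theorem stmt10 (T : ℝ) (hT : 0 ≤ T)
    (f : ℕ → ℝ → ℝ) (f₀ : ℝ → ℝ)
    (l : ℕ → StieltjesFunction ℝ) (l₀ : StieltjesFunction ℝ)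
    (hfc : ∀ n, ContinuousOn (f n) (Icc 0 T)) (hf₀c : ContinuousOn f₀ (Icc 0 T))
    (hlc : ∀ n, Continuous (l n)) (hl₀c : Continuous l₀)
    (hfu : TendstoUniformlyOn f f₀ atTop (Icc 0 T))
    (hlu : TendstoUniformlyOn (fun n => (l n : ℝ → ℝ)) l₀ atTop (Icc 0 T)) :
    Tendsto
      (fun n => ⨆ t : Icc (0:ℝ) T,
        |(∫ s in Ioc (0:ℝ) (t : ℝ), f n s ∂(l n).measure) -
          ∫ s in Ioc (0:ℝ) (t : ℝ), f₀ s ∂l₀.measure|)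
      atTop (nhds 0) := by
  haveI : Nonempty (Icc (0:ℝ) T) := (nonempty_Icc.2 hT).to_subtype
  obtain ⟨C, hC⟩ := isCompact_Icc.exists_bound_of_continuousOn hf₀c
  have hC' : ∀ x ∈ Icc (0:ℝ) T, |f₀ x| ≤ C := by simpa [Real.norm_eq_abs] using hC
  have hC0 : (0:ℝ) ≤ C := (abs_nonneg _).trans (hC' 0 (left_mem_Icc.2 hT))
  set M : ℝ := (l₀ T - l₀ 0) + 1 with hM
  have hM1 : 1 ≤ M := by
    have := l₀.mono hT
    simp only [hM]; linarith
  have hM0 : (0:ℝ) < M := lt_of_lt_of_le one_pos hM1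
  rw [Metric.tendsto_nhds]
  intro ε hε
  set ε' : ℝ := ε / (8 * M) with hε'def
  have hε'0 : 0 < ε' := by positivity
  have huc := isCompact_Icc.uniformContinuousOn_of_continuous hf₀c
  rw [Metric.uniformContinuousOn_iff] at huc
  obtain ⟨δ, hδ0, hδ⟩ := huc ε' hε'0
  obtain ⟨k0, hk0⟩ := exists_nat_gt (T / δ)
  set k : ℕ := k0 + 1 with hkdef
  have hkpos : 0 < k := Nat.succ_pos _
  have hk' : (0:ℝ) < k := Nat.cast_pos.2 hkpos
  have hTk : T / k < δ := by
    rw [div_lt_iff₀ hk']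
    have h1 : T / δ < (k:ℝ) := lt_of_lt_of_le hk0 (by exact_mod_cast Nat.le_succ k0)
    have h2 : T / δ * δ = T := div_mul_cancel₀ T hδ0.ne'
    nlinarith [mul_lt_mul_of_pos_right h1 hδ0]
  set η : ℝ := min (1/2) (ε / (8 * (C+1) * k)) with hηdef
  have hη0 : 0 < η := lt_min one_half_pos (by positivity)
  have h1 := (Metric.tendstoUniformlyOn_iff.1 hfu) ε' hε'0
  have h2 := (Metric.tendstoUniformlyOn_iff.1 hlu) η hη0
  filter_upwards [h1, h2] with n hfn hln
  have hfn' : ∀ x ∈ Icc (0:ℝ) T, |f n x - f₀ x| ≤ ε' := by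
    intro x hx
    have := hfn x hx
    rw [Real.dist_eq, abs_sub_comm] at this
    exact this.le
  have hln' : ∀ x ∈ Icc (0:ℝ) T, |l n x - l₀ x| ≤ η := by
    intro x hx
    have := hln x hx
    rw [Real.dist_eq, abs_sub_comm] at this
    exact this.le
  have hη2 : η ≤ 1/2 := min_le_left _ _
  have hlT := abs_le.1 (hln' T (right_mem_Icc.2 hT))
  have hl0 := abs_le.1 (hln' 0 (left_mem_Icc.2 hT))
  have hlnM : l n T - l n 0 ≤ M := by simp only [hM]; linarith
  have hl₀M : l₀ T - l₀ 0 ≤ M := by simp only [hM]; linarith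
  -- the per-t bound
  have hbound : ∀ t : Icc (0:ℝ) T,
      |(∫ s in Ioc (0:ℝ) (t : ℝ), f n s ∂(l n).measure) -
          ∫ s in Ioc (0:ℝ) (t : ℝ), f₀ s ∂l₀.measure| ≤ 3 * (ε' * M) + C * (k * (2 * η)) := by
    rintro ⟨t, ht⟩
    simp only
    have hIcc : Icc (0:ℝ) t ⊆ Icc (0:ℝ) T := Icc_subset_Icc le_rfl ht.2
    have int1 : IntegrableOn (f n) (Ioc 0 t) (l n).measure :=
      (((hfc n).mono hIcc).integrableOn_Icc).mono_set Ioc_subset_Icc_self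
    have int2 : IntegrableOn f₀ (Ioc 0 t) (l n).measure :=
      ((hf₀c.mono hIcc).integrableOn_Icc).mono_set Ioc_subset_Icc_self
    have hsplit : (∫ s in Ioc (0:ℝ) t, f n s ∂(l n).measure) -
          ∫ s in Ioc (0:ℝ) t, f₀ s ∂l₀.measure
        = (∫ s in Ioc (0:ℝ) t, (f n s - f₀ s) ∂(l n).measure)
          + ((∫ s in Ioc (0:ℝ) t, f₀ s ∂(l n).measure)
            - ∫ s in Ioc (0:ℝ) t, f₀ s ∂l₀.measure) := by
      rw [integral_sub int1 int2]; ring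
    rw [hsplit]
    have e1 : |∫ s in Ioc (0:ℝ) t, (f n s - f₀ s) ∂(l n).measure|
        ≤ ε' * (l n t - l n 0) :=
      abs_integral_le (l n) ht.1 (int1.sub int2)
        (fun x hx => hfn' x (hIcc (Ioc_subset_Icc_self hx)))
    have e1' : ε' * (l n t - l n 0) ≤ ε' * M := by
      have : l n t ≤ l n T := (l n).mono ht.2
      have : l n t - l n 0 ≤ M := by linarith
      exact mul_le_mul_of_nonneg_left this hε'0.le
    have hosc : ∀ x ∈ Icc (0:ℝ) T, ∀ y ∈ Icc (0:ℝ) T, |x - y| ≤ T / k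
        → |f₀ x - f₀ y| ≤ ε' := by
      intro x hx y hy hxy
      have : dist x y < δ := lt_of_le_of_lt (by rwa [Real.dist_eq]) hTk
      exact (hδ x hx y hy this).le
    have e2 := key T hT (l n) l₀ hf₀c hC' hkpos hosc hln' ht
    have e2' : ε' * ((l n T - l n 0) + (l₀ T - l₀ 0)) ≤ ε' * (M + M) := by
      apply mul_le_mul_of_nonneg_left _ hε'0.le
      linarith
    calc |(∫ s in Ioc (0:ℝ) t, (f n s - f₀ s) ∂(l n).measure)
          + ((∫ s in Ioc (0:ℝ) t, f₀ s ∂(l n).measure)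
            - ∫ s in Ioc (0:ℝ) t, f₀ s ∂l₀.measure)|
        ≤ |∫ s in Ioc (0:ℝ) t, (f n s - f₀ s) ∂(l n).measure|
          + |(∫ s in Ioc (0:ℝ) t, f₀ s ∂(l n).measure)
            - ∫ s in Ioc (0:ℝ) t, f₀ s ∂l₀.measure| := abs_add_le _ _
      _ ≤ 3 * (ε' * M) + C * (k * (2 * η)) := by nlinarith [e1, e1', e2, e2']
  have hfinal : 3 * (ε' * M) + C * (k * (2 * η)) < ε := by
    have hA : ε' * M = ε / 8 := by
      rw [hε'def]; field_simp
    have hB : C * (k * (2 * η)) ≤ ε / 4 := by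
      have hη3 : η ≤ ε / (8 * (C+1) * k) := min_le_right _ _
      have step : C * (k * (2 * η)) ≤ C * (k * (2 * (ε / (8 * (C+1) * k)))) := by
        apply mul_le_mul_of_nonneg_left _ hC0
        apply mul_le_mul_of_nonneg_left _ hk'.le
        linarith
      have heq : C * ((k:ℝ) * (2 * (ε / (8 * (C+1) * k)))) = (C / (C+1)) * (ε / 4) := by
        field_simp
        ring
      have hfrac : C / (C+1) ≤ 1 := by
        rw [div_le_one (by linarith)]; linarith
      have : (C / (C+1)) * (ε / 4) ≤ 1 * (ε / 4) :=
        mul_le_mul_of_nonneg_right hfrac (by linarith)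
      rw [heq] at step
      linarith
    rw [hA] at *
    linarith
  have hsup : (⨆ t : Icc (0:ℝ) T,
      |(∫ s in Ioc (0:ℝ) (t : ℝ), f n s ∂(l n).measure) -
        ∫ s in Ioc (0:ℝ) (t : ℝ), f₀ s ∂l₀.measure|) ≤ 3 * (ε' * M) + C * (k * (2 * η)) :=
    ciSup_le hbound
  have hnn : (0:ℝ) ≤ ⨆ t : Icc (0:ℝ) T,
      |(∫ s in Ioc (0:ℝ) (t : ℝ), f n s ∂(l n).measure) -
        ∫ s in Ioc (0:ℝ) (t : ℝ), f₀ s ∂l₀.measure| :=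
    Real.iSup_nonneg fun t => abs_nonneg _
  rw [Real.dist_eq, sub_zero, abs_of_nonneg hnn]
  exact lt_of_le_of_lt hsup hfinal
end

section
/- Let b⁻_d, b⁺_d : [0,T] × ℝᵈ → ℝ be continuous functions with b⁻_d ≥ c and b⁺_d ≥ c for some c > 0, let X_n → X uniformly on [0,T] in C([0,T]; ℝᵈ), and suppose sup_{t∈[0,T]} |∫₀ᵗ (b⁺_d(s,X_n(s))·1_{A_n(s)} − b⁻_d(s,X_n(s))·1_{A_n(s)^c}) ds| → 0 as n → ∞, where A_n(s) is a measurable-in-s family of events (subsets of [0,T]) — i.e. 1_{A_n} : [0,T] → {0,1} is measurable. Then for every t ∈ [0,T], ∫₀ᵗ 1_{A_n(s)} ds → ∫₀ᵗ b⁻_d(s,X(s)) / (b⁻_d(s,X(s)) + b⁺_d(s,X(s))) ds. -/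
open Set MeasureTheory Filter

lemma bddIntervalIntegrable {f : ℝ → ℝ} {a b M : ℝ} (hf : Measurable f)
    (hM : ∀ x ∈ Set.uIoc a b, |f x| ≤ M) : IntervalIntegrable f volume a b := by
  rw [intervalIntegrable_iff]
  refine Integrable.mono' (g := fun _ => M) ((integrableOn_const_iff (C := M)).mpr (Or.inr ?_)) hf.aestronglyMeasurable ?_
  · rw [Set.uIoc]; exact measure_Ioc_lt_top
  · filter_upwards [ae_restrict_mem measurableSet_uIoc] with x hx using hM x hx

lemma unif_comp {d : ℕ} (T : ℝ) (b : ℝ → EuclideanSpace ℝ (Fin d) → ℝ)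
    (hb : Continuous fun q : ℝ × EuclideanSpace ℝ (Fin d) => b q.1 q.2)
    (Yn : ℕ → ℝ → EuclideanSpace ℝ (Fin d)) (Y : ℝ → EuclideanSpace ℝ (Fin d))
    (hY : Continuous Y)
    (hu : TendstoUniformlyOn Yn Y atTop (Icc 0 T)) :
    TendstoUniformlyOn (fun n s => b s (Yn n s)) (fun s => b s (Y s)) atTop (Icc 0 T) := by
  rw [Metric.tendstoUniformlyOn_iff] at hu ⊢
  intro ε hε
  set K := (fun s => (s, Y s)) '' Icc 0 T with hKdef
  have hK : IsCompact K := isCompact_Icc.image (continuous_id.prodMk hY)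
  have hK1 : IsCompact (Metric.cthickening 1 K) := hK.cthickening
  have uc := hK1.uniformContinuousOn_of_continuous hb.continuousOn
  rw [Metric.uniformContinuousOn_iff] at uc
  obtain ⟨δ, hδ, hucd⟩ := uc ε hε
  filter_upwards [hu (min δ 1) (lt_min hδ one_pos)] with n hn s hs
  have h1 : dist (Y s) (Yn n s) < min δ 1 := hn s hs
  have hmemK : (s, Y s) ∈ K := mem_image_of_mem _ hs
  have hmem1 : (s, Y s) ∈ Metric.cthickening 1 K := Metric.self_subset_cthickening _ hmemK
  have hdp : dist ((s, Yn n s) : ℝ × EuclideanSpace ℝ (Fin d)) (s, Y s) = dist (Yn n s) (Y s) := by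
    rw [Prod.dist_eq]; simp [dist_self, le_max_iff, dist_nonneg, max_eq_right dist_nonneg]
  have hmem2 : ((s, Yn n s) : ℝ × EuclideanSpace ℝ (Fin d)) ∈ Metric.cthickening 1 K := by
    refine Metric.mem_cthickening_of_dist_le _ _ 1 K hmemK ?_
    rw [hdp, dist_comm]
    exact le_of_lt (lt_of_lt_of_le h1 (min_le_right _ _))
  have := hucd _ hmem1 _ hmem2 (by
    rw [dist_comm, hdp, dist_comm]
    exact lt_of_lt_of_le h1 (min_le_left _ _))
  exact this

open Set MeasureTheory Filter

lemma key_partition (t : ℝ) (ht : 0 < t) (M : ℝ) (hn : ℕ → ℝ → ℝ) (h w : ℝ → ℝ)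
    (hnmeas : ∀ n, Measurable (hn n)) (hh : Continuous h) (hw : Continuous w)
    (hbn : ∀ n, ∀ s ∈ Icc (0:ℝ) t, |hn n s| ≤ M)
    (hbh : ∀ s ∈ Icc (0:ℝ) t, |h s| ≤ M)
    (hconv : ∀ ε > 0, ∀ᶠ n in atTop, ∀ u ∈ Icc (0:ℝ) t,
      |(∫ s in (0:ℝ)..u, hn n s) - ∫ s in (0:ℝ)..u, h s| ≤ ε) :
    Tendsto (fun n => ∫ s in (0:ℝ)..t, hn n s * w s) atTop
      (nhds (∫ s in (0:ℝ)..t, h s * w s)) := by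
  have hM0 : 0 ≤ M := le_trans (abs_nonneg _) (hbh 0 ⟨le_refl 0, ht.le⟩)
  rw [Metric.tendsto_nhds]
  intro ε hε
  obtain ⟨W, hW⟩ := isCompact_Icc.exists_bound_of_continuousOn (s := Icc (0:ℝ) t) hw.continuousOn
  have hW0 : 0 ≤ W := le_trans (norm_nonneg _) (hW 0 ⟨le_refl 0, ht.le⟩)
  set ε₁ := ε / (4 * (M * t + 1)) with hε₁def
  have hMt : 0 ≤ M * t := mul_nonneg hM0 ht.le
  have hε₁ : 0 < ε₁ := by positivity
  have uc := isCompact_Icc.uniformContinuousOn_of_continuous (s := Icc (0:ℝ) t) hw.continuousOn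
  rw [Metric.uniformContinuousOn_iff] at uc
  obtain ⟨δ, hδ, hδw⟩ := uc ε₁ hε₁
  obtain ⟨k, hk⟩ := exists_nat_gt (t / δ)
  have hk0 : 0 < (k : ℝ) := lt_trans (div_pos ht hδ) hk
  set τ := t / k with hτdef
  have hτ : 0 < τ := div_pos ht hk0
  have hτδ : τ < δ := by
    have h1 : t < ↑k * δ := (div_lt_iff₀ hδ).mp hk
    rw [hτdef, div_lt_iff₀ hk0]
    linarith
  set a : ℕ → ℝ := fun i => i * τ with hadef
  have ha0 : a 0 = 0 := by simp [hadef]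
  have hkτ : (k:ℝ) * τ = t := by rw [hτdef]; field_simp
  have hak : a k = t := hkτ
  have hasucc : ∀ i : ℕ, a (i + 1) = a i + τ := by
    intro i; rw [hadef]; push_cast; ring
  have hamem : ∀ i : ℕ, i ≤ k → a i ∈ Icc (0:ℝ) t := by
    intro i hi
    have hik : (i:ℝ) ≤ (k:ℝ) := by exact_mod_cast hi
    constructor
    · show (0:ℝ) ≤ ↑i * τ
      positivity
    · show (i:ℝ) * τ ≤ t
      nlinarith [hτ]
  have hasub : ∀ i : ℕ, i < k → Set.uIoc (a i) (a (i + 1)) ⊆ Icc (0:ℝ) t := by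
    intro i hi x hx
    rw [Set.uIoc_of_le (by rw [hasucc]; linarith)] at hx
    exact ⟨le_trans (hamem i hi.le).1 hx.1.le, le_trans hx.2 (hamem (i+1) hi).2⟩
  -- integrability
  have hint0 : ∀ (g : ℝ → ℝ), Measurable g → (∀ s ∈ Icc (0:ℝ) t, |g s| ≤ M) →
      ∀ u ∈ Icc (0:ℝ) t, IntervalIntegrable g volume 0 u := by
    intro g hg hgb u hu
    refine bddIntervalIntegrable (M := M) hg fun x hx => ?_
    rw [Set.uIoc_of_le hu.1] at hx
    exact hgb x ⟨hx.1.le, le_trans hx.2 hu.2⟩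
  have hintn0 : ∀ n, ∀ u ∈ Icc (0:ℝ) t, IntervalIntegrable (hn n) volume 0 u :=
    fun n => hint0 (hn n) (hnmeas n) (hbn n)
  have hinth0 : ∀ u ∈ Icc (0:ℝ) t, IntervalIntegrable h volume 0 u :=
    hint0 h hh.measurable hbh
  have hintsub : ∀ (g : ℝ → ℝ), Measurable g → (∀ s ∈ Icc (0:ℝ) t, |g s| ≤ M) →
      ∀ i : ℕ, i < k → IntervalIntegrable g volume (a i) (a (i+1)) := by
    intro g hg hgb i hi
    exact bddIntervalIntegrable hg fun x hx => hgb x (hasub i hi hx)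
  -- sum decompositions
  have hsum : ∀ (g : ℝ → ℝ), (∀ i : ℕ, i < k → IntervalIntegrable g volume (a i) (a (i+1))) →
      (∫ s in (0:ℝ)..t, g s) = ∑ i ∈ Finset.range k, ∫ s in (a i)..(a (i+1)), g s := by
    intro g hg
    rw [intervalIntegral.sum_integral_adjacent_intervals hg, ha0, hak]
  set ε₂ := ε / (8 * (k * W + 1)) with hε₂def
  have hkW : 0 ≤ (k:ℝ) * W := mul_nonneg hk0.le hW0
  have hε₂ : 0 < ε₂ := by positivity
  filter_upwards [hconv ε₂ hε₂] with n hcn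
  rw [Real.dist_eq]
  have hintnw : ∀ i : ℕ, i < k → IntervalIntegrable (fun s => hn n s * w s) volume (a i) (a (i+1)) := by
    intro i hi
    refine bddIntervalIntegrable (M := M * W) ((hnmeas n).mul hw.measurable) fun x hx => ?_
    have hx' := hasub i hi hx
    rw [abs_mul]
    exact mul_le_mul (hbn n x hx') (hW x hx') (abs_nonneg _) hM0
  have hinthw : ∀ i : ℕ, i < k → IntervalIntegrable (fun s => h s * w s) volume (a i) (a (i+1)) := by
    intro i hi
    refine bddIntervalIntegrable (M := M * W) (hh.measurable.mul hw.measurable) fun x hx => ?_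
    have hx' := hasub i hi hx
    rw [abs_mul]
    exact mul_le_mul (hbh x hx') (hW x hx') (abs_nonneg _) hM0
  rw [hsum _ hintnw, hsum _ hinthw, ← Finset.sum_sub_distrib]
  have key_i : ∀ i ∈ Finset.range k,
      |(∫ s in (a i)..(a (i+1)), hn n s * w s) - ∫ s in (a i)..(a (i+1)), h s * w s|
        ≤ 2 * (ε₁ * M * τ) + 2 * (W * ε₂) := by
    intro i hi'
    have hi := Finset.mem_range.mp hi'
    have hmem_i := hamem i hi.le
    have hmem_i1 := hamem (i+1) hi
    -- pointwise estimate on w near a i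
    have hwnear : ∀ x ∈ Set.uIoc (a i) (a (i+1)), |w x - w (a i)| ≤ ε₁ := by
      intro x hx
      have hx' := hasub i hi hx
      have hdist : dist x (a i) < δ := by
        rw [Set.uIoc_of_le (by rw [hasucc]; linarith)] at hx
        rw [Real.dist_eq, abs_of_pos (by linarith [hx.1])]
        have := hx.2
        rw [hasucc] at this
        linarith
      exact le_of_lt (hδw x hx' (a i) hmem_i hdist)
    have e1 : (∫ s in (a i)..(a (i+1)), hn n s * w s)
        = (∫ s in (a i)..(a (i+1)), hn n s * (w s - w (a i)))
          + w (a i) * ∫ s in (a i)..(a (i+1)), hn n s := by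
      rw [← intervalIntegral.integral_const_mul, ← intervalIntegral.integral_add]
      · apply intervalIntegral.integral_congr
        intro s _; ring
      · refine bddIntervalIntegrable (M := M * ε₁) ((hnmeas n).mul (hw.measurable.sub measurable_const))
          fun x hx => ?_
        rw [abs_mul]
        exact mul_le_mul (hbn n x (hasub i hi hx)) (hwnear x hx) (abs_nonneg _) hM0
      · exact (hintsub (hn n) (hnmeas n) (hbn n) i hi).const_mul _
    have e2 : (∫ s in (a i)..(a (i+1)), h s * w s)
        = (∫ s in (a i)..(a (i+1)), h s * (w s - w (a i)))
          + w (a i) * ∫ s in (a i)..(a (i+1)), h s := by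
      rw [← intervalIntegral.integral_const_mul, ← intervalIntegral.integral_add]
      · apply intervalIntegral.integral_congr
        intro s _; ring
      · refine bddIntervalIntegrable (M := M * ε₁) (hh.measurable.mul (hw.measurable.sub measurable_const))
          fun x hx => ?_
        rw [abs_mul]
        exact mul_le_mul (hbh x (hasub i hi hx)) (hwnear x hx) (abs_nonneg _) hM0
      · exact (hintsub h hh.measurable hbh i hi).const_mul _
    have b1 : |∫ s in (a i)..(a (i+1)), hn n s * (w s - w (a i))| ≤ ε₁ * M * τ := by
      have := intervalIntegral.norm_integral_le_of_norm_le_const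
        (C := M * ε₁) (f := fun s => hn n s * (w s - w (a i))) (a := a i) (b := a (i+1))
        (fun x hx => by
          rw [Real.norm_eq_abs, abs_mul]
          exact mul_le_mul (hbn n x (hasub i hi hx)) (hwnear x hx) (abs_nonneg _) hM0)
      rw [Real.norm_eq_abs] at this
      calc |∫ s in (a i)..(a (i+1)), hn n s * (w s - w (a i))| ≤ M * ε₁ * |a (i+1) - a i| := this
        _ = ε₁ * M * τ := by rw [hasucc]; rw [show a i + τ - a i = τ by ring, abs_of_pos hτ]; ring
    have b2 : |∫ s in (a i)..(a (i+1)), h s * (w s - w (a i))| ≤ ε₁ * M * τ := by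
      have := intervalIntegral.norm_integral_le_of_norm_le_const
        (C := M * ε₁) (f := fun s => h s * (w s - w (a i))) (a := a i) (b := a (i+1))
        (fun x hx => by
          rw [Real.norm_eq_abs, abs_mul]
          exact mul_le_mul (hbh x (hasub i hi hx)) (hwnear x hx) (abs_nonneg _) hM0)
      rw [Real.norm_eq_abs] at this
      calc |∫ s in (a i)..(a (i+1)), h s * (w s - w (a i))| ≤ M * ε₁ * |a (i+1) - a i| := this
        _ = ε₁ * M * τ := by rw [hasucc]; rw [show a i + τ - a i = τ by ring, abs_of_pos hτ]; ring
    have b3 : |(∫ s in (a i)..(a (i+1)), hn n s) - ∫ s in (a i)..(a (i+1)), h s| ≤ 2 * ε₂ := by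
      have en : (∫ s in (a i)..(a (i+1)), hn n s)
          = (∫ s in (0:ℝ)..(a (i+1)), hn n s) - ∫ s in (0:ℝ)..(a i), hn n s :=
        (intervalIntegral.integral_interval_sub_left (hintn0 n _ hmem_i1) (hintn0 n _ hmem_i)).symm
      have eh : (∫ s in (a i)..(a (i+1)), h s)
          = (∫ s in (0:ℝ)..(a (i+1)), h s) - ∫ s in (0:ℝ)..(a i), h s :=
        (intervalIntegral.integral_interval_sub_left (hinth0 _ hmem_i1) (hinth0 _ hmem_i)).symm
      rw [en, eh]
      have h1 := hcn (a (i+1)) hmem_i1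
      have h2 := hcn (a i) hmem_i
      calc |((∫ s in (0:ℝ)..(a (i+1)), hn n s) - ∫ s in (0:ℝ)..(a i), hn n s)
            - ((∫ s in (0:ℝ)..(a (i+1)), h s) - ∫ s in (0:ℝ)..(a i), h s)|
          = |((∫ s in (0:ℝ)..(a (i+1)), hn n s) - ∫ s in (0:ℝ)..(a (i+1)), h s)
            - ((∫ s in (0:ℝ)..(a i), hn n s) - ∫ s in (0:ℝ)..(a i), h s)| := by ring_nf
        _ ≤ |(∫ s in (0:ℝ)..(a (i+1)), hn n s) - ∫ s in (0:ℝ)..(a (i+1)), h s|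
            + |(∫ s in (0:ℝ)..(a i), hn n s) - ∫ s in (0:ℝ)..(a i), h s| := abs_sub _ _
        _ ≤ ε₂ + ε₂ := add_le_add h1 h2
        _ = 2 * ε₂ := by ring
    calc |(∫ s in (a i)..(a (i+1)), hn n s * w s) - ∫ s in (a i)..(a (i+1)), h s * w s|
        = |((∫ s in (a i)..(a (i+1)), hn n s * (w s - w (a i)))
            - ∫ s in (a i)..(a (i+1)), h s * (w s - w (a i)))
          + w (a i) * ((∫ s in (a i)..(a (i+1)), hn n s) - ∫ s in (a i)..(a (i+1)), h s)| := by
          rw [e1, e2]; congr 1; ring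
      _ ≤ |(∫ s in (a i)..(a (i+1)), hn n s * (w s - w (a i)))
            - ∫ s in (a i)..(a (i+1)), h s * (w s - w (a i))|
          + |w (a i)| * |(∫ s in (a i)..(a (i+1)), hn n s) - ∫ s in (a i)..(a (i+1)), h s| := by
          rw [← abs_mul]; exact abs_add_le _ _
      _ ≤ (|∫ s in (a i)..(a (i+1)), hn n s * (w s - w (a i))|
            + |∫ s in (a i)..(a (i+1)), h s * (w s - w (a i))|) + W * (2 * ε₂) := by
          have hwa : |w (a i)| ≤ W := by
            have := hW (a i) hmem_i; rwa [Real.norm_eq_abs] at this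
          exact add_le_add (abs_sub _ _) (mul_le_mul hwa b3 (abs_nonneg _) hW0)
      _ ≤ (ε₁ * M * τ + ε₁ * M * τ) + W * (2 * ε₂) := by gcongr
      _ = 2 * (ε₁ * M * τ) + 2 * (W * ε₂) := by ring
  calc |∑ i ∈ Finset.range k,
        ((∫ s in (a i)..(a (i+1)), hn n s * w s) - ∫ s in (a i)..(a (i+1)), h s * w s)|
      ≤ ∑ i ∈ Finset.range k,
        |(∫ s in (a i)..(a (i+1)), hn n s * w s) - ∫ s in (a i)..(a (i+1)), h s * w s| :=
        Finset.abs_sum_le_sum_abs _ _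
    _ ≤ ∑ _i ∈ Finset.range k, (2 * (ε₁ * M * τ) + 2 * (W * ε₂)) :=
        Finset.sum_le_sum key_i
    _ = k * (2 * (ε₁ * M * τ) + 2 * (W * ε₂)) := by
        rw [Finset.sum_const, Finset.card_range, nsmul_eq_mul]
    _ = 2 * ε₁ * M * t + 2 * ((k : ℝ) * W) * ε₂ := by
        rw [← hkτ]; ring
    _ < ε := by
        have heq1 : ε₁ * (4 * (M * t + 1)) = ε := by rw [hε₁def]; field_simp
        have heq2 : ε₂ * (8 * ((k:ℝ) * W + 1)) = ε := by rw [hε₂def]; field_simp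
        nlinarith [hε₁, hε₂, hMt, hkW]

open Set MeasureTheory Filter


/-- Deterministic content of Lemma 5 (`lem_time`): if the signed occupation integral tends to
zero uniformly on `[0,T]`, then the occupation time of `A n` converges to the weighted average
`∫₀ᵗ b⁻/(b⁻ + b⁺)` along the limit path. -/
theorem stmt11 {d : ℕ} (T : ℝ) (hT : 0 ≤ T) (c : ℝ) (hc : 0 < c)
    (bm bp : ℝ → EuclideanSpace ℝ (Fin d) → ℝ)
    (hbmc : Continuous fun q : ℝ × EuclideanSpace ℝ (Fin d) => bm q.1 q.2)
    (hbpc : Continuous fun q : ℝ × EuclideanSpace ℝ (Fin d) => bp q.1 q.2)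
    (hbm : ∀ s x, c ≤ bm s x) (hbp : ∀ s x, c ≤ bp s x)
    (Xn : ℕ → ℝ → EuclideanSpace ℝ (Fin d)) (X : ℝ → EuclideanSpace ℝ (Fin d))
    (hXnc : ∀ n, ContinuousOn (Xn n) (Icc 0 T)) (hXc : ContinuousOn X (Icc 0 T))
    (hXu : TendstoUniformlyOn Xn X atTop (Icc 0 T))
    (A : ℕ → Set ℝ) (hA : ∀ n, MeasurableSet (A n))
    (hsigned : Tendsto
      (fun n => ⨆ t : Icc (0:ℝ) T,
        |∫ s in (0:ℝ)..(t : ℝ),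
          ((A n).indicator (fun _ => (1:ℝ)) s * bp s (Xn n s) -
            (1 - (A n).indicator (fun _ => (1:ℝ)) s) * bm s (Xn n s))|)
      atTop (nhds 0)) :
    ∀ t ∈ Icc 0 T,
      Tendsto (fun n => ∫ s in (0:ℝ)..t, (A n).indicator (fun _ => (1:ℝ)) s) atTop
        (nhds (∫ s in (0:ℝ)..t, bm s (X s) / (bm s (X s) + bp s (X s)))) := by
  intro t htmem
  obtain ⟨ht0, htT⟩ := htmem
  rcases eq_or_lt_of_le ht0 with heq | htpos
  · rw [← heq]
    simp only [intervalIntegral.integral_same]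
    exact tendsto_const_nhds
  -- setup: continuous extensions via projection onto [0,T]
  set proj : ℝ → ℝ := fun s => max 0 (min s T) with hprojdef
  have hprojc : Continuous proj := continuous_const.max (continuous_id.min continuous_const)
  have hprojmem : ∀ s, proj s ∈ Icc (0:ℝ) T := fun s =>
    ⟨le_max_left _ _, max_le hT (min_le_right s T)⟩
  have hprojid : ∀ s ∈ Icc (0:ℝ) T, proj s = s := by
    intro s hs
    rw [hprojdef]
    simp only
    rw [min_eq_left hs.2, max_eq_right hs.1]
  set Y : ℝ → EuclideanSpace ℝ (Fin d) := fun s => X (proj s) with hYdef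
  set Yn : ℕ → ℝ → EuclideanSpace ℝ (Fin d) := fun n s => Xn n (proj s) with hYndef
  have hYc : Continuous Y := hXc.comp_continuous hprojc hprojmem
  have hYnc : ∀ n, Continuous (Yn n) := fun n => (hXnc n).comp_continuous hprojc hprojmem
  have hYu : TendstoUniformlyOn Yn Y atTop (Icc 0 T) := by
    have h := hXu.comp proj
    exact h.mono fun x _ => hprojmem x
  set Bm : ℝ → ℝ := fun s => bm s (Y s) with hBmdef
  set Bp : ℝ → ℝ := fun s => bp s (Y s) with hBpdef
  set Bmn : ℕ → ℝ → ℝ := fun n s => bm s (Yn n s) with hBmndef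
  set Bpn : ℕ → ℝ → ℝ := fun n s => bp s (Yn n s) with hBpndef
  have hBmc : Continuous Bm := hbmc.comp (continuous_id.prodMk hYc)
  have hBpc : Continuous Bp := hbpc.comp (continuous_id.prodMk hYc)
  have hBmnc : ∀ n, Continuous (Bmn n) := fun n => hbmc.comp (continuous_id.prodMk (hYnc n))
  have hBpnc : ∀ n, Continuous (Bpn n) := fun n => hbpc.comp (continuous_id.prodMk (hYnc n))
  have hBmU : TendstoUniformlyOn Bmn Bm atTop (Icc 0 T) := unif_comp T bm hbmc Yn Y hYc hYu
  have hBpU : TendstoUniformlyOn Bpn Bp atTop (Icc 0 T) := unif_comp T bp hbpc Yn Y hYc hYu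
  have hpos : ∀ s, 0 < Bm s + Bp s := by
    intro s
    have h1 := hbm s (Y s)
    have h2 := hbp s (Y s)
    simp only [hBmdef, hBpdef]
    linarith
  set I : ℕ → ℝ → ℝ := fun n => (A n).indicator fun _ => (1:ℝ) with hIdef
  have hImeas : ∀ n, Measurable (I n) := fun n => measurable_const.indicator (hA n)
  have hI0 : ∀ n s, 0 ≤ I n s := by
    intro n s; simp only [hIdef]
    exact Set.indicator_nonneg (fun _ _ => zero_le_one) s
  have hI1 : ∀ n s, I n s ≤ 1 := by
    intro n s; simp only [hIdef]
    exact Set.indicator_apply_le' (fun _ => le_refl 1) (fun _ => zero_le_one)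
  have hIabs : ∀ n s, |I n s| ≤ 1 := fun n s => abs_le.mpr ⟨by linarith [hI0 n s], hI1 n s⟩
  set w : ℝ → ℝ := fun s => (Bm s + Bp s)⁻¹ with hwdef
  have hwc : Continuous w := (hBmc.add hBpc).inv₀ fun s => (hpos s).ne'
  -- global bounds
  obtain ⟨C1, hC1⟩ := isCompact_Icc.exists_bound_of_continuousOn (s := Icc (0:ℝ) T)
    hBmc.continuousOn
  obtain ⟨C2, hC2⟩ := isCompact_Icc.exists_bound_of_continuousOn (s := Icc (0:ℝ) T)
    hBpc.continuousOn
  have hC10 : 0 ≤ C1 := le_trans (norm_nonneg _) (hC1 0 ⟨le_refl 0, hT⟩)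
  have hC20 : 0 ≤ C2 := le_trans (norm_nonneg _) (hC2 0 ⟨le_refl 0, hT⟩)
  have hC1' : ∀ s ∈ Icc (0:ℝ) T, |Bm s| ≤ C1 := by
    intro s hs; have := hC1 s hs; rwa [Real.norm_eq_abs] at this
  have hC2' : ∀ s ∈ Icc (0:ℝ) T, |Bp s| ≤ C2 := by
    intro s hs; have := hC2 s hs; rwa [Real.norm_eq_abs] at this
  -- rewrite the target integral
  have target_eq : (∫ s in (0:ℝ)..t, bm s (X s) / (bm s (X s) + bp s (X s)))
      = ∫ s in (0:ℝ)..t, Bm s * w s := by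
    apply intervalIntegral.integral_congr
    intro s hs
    rw [Set.uIcc_of_le ht0] at hs
    have hsT : s ∈ Icc (0:ℝ) T := ⟨hs.1, hs.2.trans htT⟩
    have hYs : Y s = X s := by simp only [hYdef]; rw [hprojid s hsT]
    simp only [hBmdef, hBpdef, hwdef]
    rw [hYs, div_eq_mul_inv]
  rw [target_eq]
  have left_eq : ∀ n, (∫ s in (0:ℝ)..t, (I n s * (Bm s + Bp s)) * w s)
      = ∫ s in (0:ℝ)..t, (A n).indicator (fun _ => (1:ℝ)) s := by
    intro n
    apply intervalIntegral.integral_congr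
    intro s _
    simp only [hwdef, hIdef]
    rw [mul_assoc, mul_inv_cancel₀ (hpos s).ne', mul_one]
  -- bounds for the key lemma
  have hbn : ∀ n, ∀ s ∈ Icc (0:ℝ) t, |I n s * (Bm s + Bp s)| ≤ C1 + C2 := by
    intro n s hs
    have hsT : s ∈ Icc (0:ℝ) T := ⟨hs.1, hs.2.trans htT⟩
    rw [abs_mul]
    calc |I n s| * |Bm s + Bp s| ≤ 1 * (C1 + C2) := by
          refine mul_le_mul (hIabs n s) ?_ (abs_nonneg _) zero_le_one
          exact (abs_add_le _ _).trans (add_le_add (hC1' s hsT) (hC2' s hsT))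
      _ = C1 + C2 := one_mul _
  have hbh : ∀ s ∈ Icc (0:ℝ) t, |Bm s| ≤ C1 + C2 := by
    intro s hs
    exact le_trans (hC1' s ⟨hs.1, hs.2.trans htT⟩) (by linarith)
  -- the uniform convergence of primitives
  have hconv : ∀ ε > 0, ∀ᶠ n in atTop, ∀ u ∈ Icc (0:ℝ) t,
      |(∫ s in (0:ℝ)..u, I n s * (Bm s + Bp s)) - ∫ s in (0:ℝ)..u, Bm s| ≤ ε := by
    intro ε hε
    set ε' := ε / (4 * (T + 1)) with hε'def
    have hε' : 0 < ε' := by positivity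
    have E1 := hsigned.eventually_lt_const (show (0:ℝ) < ε/4 by positivity)
    have E2 := Metric.tendstoUniformlyOn_iff.mp hBmU ε' hε'
    have E3 := Metric.tendstoUniformlyOn_iff.mp hBpU ε' hε'
    filter_upwards [E1, E2, E3] with n h1 h2 h3
    intro u hu
    have huT : u ∈ Icc (0:ℝ) T := ⟨hu.1, hu.2.trans htT⟩
    have hsubT : Set.uIoc (0:ℝ) u ⊆ Icc (0:ℝ) T := by
      rw [Set.uIoc_of_le hu.1]
      exact fun x hx => ⟨hx.1.le, hx.2.trans huT.2⟩
    obtain ⟨D1, hD1⟩ := isCompact_Icc.exists_bound_of_continuousOn (s := Icc (0:ℝ) T)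
      (hBmnc n).continuousOn
    obtain ⟨D2, hD2⟩ := isCompact_Icc.exists_bound_of_continuousOn (s := Icc (0:ℝ) T)
      (hBpnc n).continuousOn
    have hD10 : 0 ≤ D1 := le_trans (norm_nonneg _) (hD1 0 ⟨le_refl 0, hT⟩)
    have hD20 : 0 ≤ D2 := le_trans (norm_nonneg _) (hD2 0 ⟨le_refl 0, hT⟩)
    have hD1' : ∀ s ∈ Icc (0:ℝ) T, |Bmn n s| ≤ D1 := by
      intro s hs; have := hD1 s hs; rwa [Real.norm_eq_abs] at this
    have hD2' : ∀ s ∈ Icc (0:ℝ) T, |Bpn n s| ≤ D2 := by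
      intro s hs; have := hD2 s hs; rwa [Real.norm_eq_abs] at this
    -- pieces
    set g1 : ℝ → ℝ := fun s => I n s * Bpn n s - (1 - I n s) * Bmn n s with hg1def
    set g3 : ℝ → ℝ := fun s => I n s * ((Bm s + Bp s) - (Bmn n s + Bpn n s)) with hg3def
    have hg1meas : Measurable g1 := by
      rw [hg1def]
      exact ((hImeas n).mul (hBpnc n).measurable).sub
        ((measurable_const.sub (hImeas n)).mul (hBmnc n).measurable)
    have hg3meas : Measurable g3 := by
      rw [hg3def]
      exact (hImeas n).mul ((hBmc.add hBpc).measurable.sub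
        ((hBmnc n).measurable.add (hBpnc n).measurable))
    have hg1bd : ∀ s ∈ Icc (0:ℝ) T, |g1 s| ≤ D1 + D2 := by
      intro s hs
      have hIab2 : |1 - I n s| ≤ 1 := abs_le.mpr ⟨by linarith [hI1 n s], by linarith [hI0 n s]⟩
      simp only [hg1def]
      calc |I n s * Bpn n s - (1 - I n s) * Bmn n s|
          ≤ |I n s * Bpn n s| + |(1 - I n s) * Bmn n s| := abs_sub _ _
        _ ≤ 1 * D2 + 1 * D1 := by
            rw [abs_mul, abs_mul]
            exact add_le_add (mul_le_mul (hIabs n s) (hD2' s hs) (abs_nonneg _) zero_le_one)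
              (mul_le_mul hIab2 (hD1' s hs) (abs_nonneg _) zero_le_one)
        _ = D1 + D2 := by ring
    -- integrability
    have hig1 : IntervalIntegrable g1 volume 0 u :=
      bddIntervalIntegrable (M := D1 + D2) hg1meas fun x hx => hg1bd x (hsubT hx)
    have hig2 : IntervalIntegrable (fun s => Bmn n s - Bm s) volume 0 u :=
      ((hBmnc n).sub hBmc).intervalIntegrable 0 u
    have hig3 : IntervalIntegrable g3 volume 0 u := by
      refine bddIntervalIntegrable (M := (C1 + C2) + (D1 + D2)) hg3meas fun x hx => ?_
      have hxT := hsubT hx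
      simp only [hg3def]
      rw [abs_mul]
      calc |I n x| * |(Bm x + Bp x) - (Bmn n x + Bpn n x)|
          ≤ 1 * ((C1 + C2) + (D1 + D2)) := by
            refine mul_le_mul (hIabs n x) ?_ (abs_nonneg _) zero_le_one
            calc |(Bm x + Bp x) - (Bmn n x + Bpn n x)|
                ≤ |Bm x + Bp x| + |Bmn n x + Bpn n x| := abs_sub _ _
              _ ≤ (C1 + C2) + (D1 + D2) := by
                  exact add_le_add ((abs_add_le _ _).trans (add_le_add (hC1' x hxT) (hC2' x hxT)))
                    ((abs_add_le _ _).trans (add_le_add (hD1' x hxT) (hD2' x hxT)))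
        _ = (C1 + C2) + (D1 + D2) := one_mul _
    have higBm : IntervalIntegrable Bm volume 0 u := hBmc.intervalIntegrable 0 u
    -- decomposition
    have hdecomp : (∫ s in (0:ℝ)..u, I n s * (Bm s + Bp s))
        = (((∫ s in (0:ℝ)..u, g1 s) + ∫ s in (0:ℝ)..u, (Bmn n s - Bm s))
            + ∫ s in (0:ℝ)..u, g3 s) + ∫ s in (0:ℝ)..u, Bm s := by
      rw [← intervalIntegral.integral_add hig1 hig2,
        ← intervalIntegral.integral_add (hig1.add hig2) hig3,
        ← intervalIntegral.integral_add ((hig1.add hig2).add hig3) higBm]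
      apply intervalIntegral.integral_congr
      intro s _
      simp only [hg1def, hg3def]
      ring
    -- bound piece 1 via the supremum hypothesis
    have horig : ∀ v : ℝ, v ∈ Icc (0:ℝ) T →
        (∫ s in (0:ℝ)..v,
          ((A n).indicator (fun _ => (1:ℝ)) s * bp s (Xn n s) -
            (1 - (A n).indicator (fun _ => (1:ℝ)) s) * bm s (Xn n s)))
          = ∫ s in (0:ℝ)..v, g1 s := by
      intro v hv
      apply intervalIntegral.integral_congr
      intro s hs
      rw [Set.uIcc_of_le hv.1] at hs
      have hsT : s ∈ Icc (0:ℝ) T := ⟨hs.1, hs.2.trans hv.2⟩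
      simp only [hg1def, hIdef, hBpndef, hBmndef, hYndef]
      rw [hprojid s hsT]
    have hb1 : |∫ s in (0:ℝ)..u, g1 s| < ε / 4 := by
      have hbdd : BddAbove (Set.range fun v : Icc (0:ℝ) T =>
          |∫ s in (0:ℝ)..(v : ℝ),
            ((A n).indicator (fun _ => (1:ℝ)) s * bp s (Xn n s) -
              (1 - (A n).indicator (fun _ => (1:ℝ)) s) * bm s (Xn n s))|) := by
        refine ⟨(D1 + D2) * T, ?_⟩
        rintro x ⟨v, rfl⟩
        dsimp only
        rw [horig v v.2]
        have hle := intervalIntegral.norm_integral_le_of_norm_le_const (C := D1 + D2)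
          (f := g1) (a := 0) (b := (v:ℝ)) (fun x hx => by
            rw [Real.norm_eq_abs]
            refine hg1bd x ?_
            rw [Set.uIoc_of_le v.2.1] at hx
            exact ⟨hx.1.le, hx.2.trans v.2.2⟩)
        rw [Real.norm_eq_abs] at hle
        calc |∫ s in (0:ℝ)..(v:ℝ), g1 s| ≤ (D1 + D2) * |(v:ℝ) - 0| := hle
          _ = (D1 + D2) * (v:ℝ) := by rw [sub_zero, abs_of_nonneg v.2.1]
          _ ≤ (D1 + D2) * T := by
              exact mul_le_mul_of_nonneg_left v.2.2 (by linarith)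
      have hle := le_ciSup hbdd (⟨u, huT⟩ : Icc (0:ℝ) T)
      dsimp only at hle
      rw [horig u huT] at hle
      exact lt_of_le_of_lt hle h1
    -- bound piece 2
    have hb2 : |∫ s in (0:ℝ)..u, (Bmn n s - Bm s)| ≤ ε' * T := by
      have hle := intervalIntegral.norm_integral_le_of_norm_le_const (C := ε')
        (f := fun s => Bmn n s - Bm s) (a := 0) (b := u) (fun x hx => by
          have hxT := hsubT hx
          rw [Real.norm_eq_abs, ← Real.dist_eq, dist_comm]
          exact (h2 x hxT).le)
      rw [Real.norm_eq_abs] at hle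
      calc |∫ s in (0:ℝ)..u, (Bmn n s - Bm s)| ≤ ε' * |u - 0| := hle
        _ = ε' * u := by rw [sub_zero, abs_of_nonneg hu.1]
        _ ≤ ε' * T := mul_le_mul_of_nonneg_left huT.2 hε'.le
    -- bound piece 3
    have hb3 : |∫ s in (0:ℝ)..u, g3 s| ≤ 2 * ε' * T := by
      have hle := intervalIntegral.norm_integral_le_of_norm_le_const (C := 2 * ε')
        (f := g3) (a := 0) (b := u) (fun x hx => by
          have hxT := hsubT hx
          simp only [Real.norm_eq_abs, hg3def]
          rw [abs_mul]
          have hd1 : |Bm x - Bmn n x| ≤ ε' := by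
            rw [← Real.dist_eq]; exact (h2 x hxT).le
          have hd2 : |Bp x - Bpn n x| ≤ ε' := by
            rw [← Real.dist_eq]; exact (h3 x hxT).le
          calc |I n x| * |(Bm x + Bp x) - (Bmn n x + Bpn n x)|
              ≤ 1 * (2 * ε') := by
                refine mul_le_mul (hIabs n x) ?_ (abs_nonneg _) zero_le_one
                calc |(Bm x + Bp x) - (Bmn n x + Bpn n x)|
                    = |(Bm x - Bmn n x) + (Bp x - Bpn n x)| := by congr 1; ring
                  _ ≤ |Bm x - Bmn n x| + |Bp x - Bpn n x| := abs_add_le _ _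
                  _ ≤ 2 * ε' := by linarith
            _ = 2 * ε' := one_mul _)
      rw [Real.norm_eq_abs] at hle
      calc |∫ s in (0:ℝ)..u, g3 s| ≤ 2 * ε' * |u - 0| := hle
        _ = 2 * ε' * u := by rw [sub_zero, abs_of_nonneg hu.1]
        _ ≤ 2 * ε' * T := by nlinarith [huT.2, hε'.le]
    -- combine
    rw [hdecomp]
    have heq' : ε' * (4 * (T + 1)) = ε := by rw [hε'def]; field_simp
    calc |((((∫ s in (0:ℝ)..u, g1 s) + ∫ s in (0:ℝ)..u, (Bmn n s - Bm s))
            + ∫ s in (0:ℝ)..u, g3 s) + ∫ s in (0:ℝ)..u, Bm s) - ∫ s in (0:ℝ)..u, Bm s|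
        = |((∫ s in (0:ℝ)..u, g1 s) + ∫ s in (0:ℝ)..u, (Bmn n s - Bm s))
            + ∫ s in (0:ℝ)..u, g3 s| := by congr 1; ring
      _ ≤ |(∫ s in (0:ℝ)..u, g1 s) + ∫ s in (0:ℝ)..u, (Bmn n s - Bm s)|
            + |∫ s in (0:ℝ)..u, g3 s| := abs_add_le _ _
      _ ≤ (|∫ s in (0:ℝ)..u, g1 s| + |∫ s in (0:ℝ)..u, (Bmn n s - Bm s)|)
            + |∫ s in (0:ℝ)..u, g3 s| := by gcongr; exact abs_add_le _ _
      _ ≤ (ε / 4 + ε' * T) + 2 * ε' * T := by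
          exact add_le_add (add_le_add hb1.le hb2) hb3
      _ ≤ ε := by nlinarith [hε'.le, hT]
  have keyres := key_partition t htpos (C1 + C2) (fun n s => I n s * (Bm s + Bp s)) Bm w
    (fun n => (hImeas n).mul (hBmc.add hBpc).measurable) hBmc hwc hbn hbh hconv
  exact keyres.congr left_eq
end
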